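/- Let E be a real normed vector space, u : ℂ → E a C¹ map (over ℝ), and 0 < r < 1. Suppose C ∈ ℝ satisfies ∫_{z : r ≤ ‖z‖ ≤ √r} ‖Du(z)‖² dA(z) ≤ C, where Du(z) is the Fréchet derivative of u at z, ‖Du(z)‖ its operator norm, and dA the Lebesgue (area) measure on ℂ. Then there exists ρ ∈ [r, √r] such that ∫_0^{2π} ‖Du(ρ·e^{iθ})(i·ρ·e^{iθ})‖ dθ ≤ √(4π·C / log(1/r)); that is, the length of the loop θ ↦ u(ρ e^{iθ}) is at most √(4πC / log(1/r)). -/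

import Mathlib

open MeasureTheory Real

/-- Cauchy–Schwarz for interval integrals of continuous functions. -/
private lemma cs_interval {f : ℝ → ℝ} (hf : Continuous f) {a b : ℝ} (hab : a ≤ b) :
    (∫ x in a..b, f x) ^ 2 ≤ (b - a) * ∫ x in a..b, f x ^ 2 := by
  rcases eq_or_lt_of_le hab with rfl | hab
  · simp
  set I := ∫ x in a..b, f x with hI
  set c : ℝ := I / (b - a) with hc
  have hba : (0:ℝ) < b - a := sub_pos.2 hab
  have key : (0:ℝ) ≤ ∫ x in a..b, (f x - c) ^ 2 :=
    intervalIntegral.integral_nonneg hab.le fun x _ => sq_nonneg _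
  have expand : ∫ x in a..b, (f x - c) ^ 2
      = (∫ x in a..b, f x ^ 2) - 2 * c * I + c ^ 2 * (b - a) := by
    have h1 : ∀ x : ℝ, (f x - c) ^ 2 = f x ^ 2 - 2 * c * f x + c ^ 2 := fun x => by ring
    simp_rw [h1]
    rw [intervalIntegral.integral_add (f := fun x => f x ^ 2 - 2 * c * f x) (g := fun _ => c ^ 2)
        (((hf.pow 2).sub (continuous_const.mul hf)).intervalIntegrable _ _)
        (continuous_const.intervalIntegrable _ _),
      intervalIntegral.integral_sub (f := fun x => f x ^ 2) (g := fun x => 2 * c * f x) ((hf.pow 2).intervalIntegrable _ _)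
        ((continuous_const.mul hf).intervalIntegrable _ _),
      intervalIntegral.integral_const_mul, intervalIntegral.integral_const]
    rw [smul_eq_mul]; ring
  rw [expand] at key
  have hc' : c * (b - a) = I := by rw [hc, div_mul_cancel₀ _ hba.ne']
  nlinarith [mul_nonneg hba.le key, sq_nonneg (c * (b - a) - I)]

/-- Courant–Lebesgue lemma: if the Dirichlet energy of a `C¹` map `u : ℂ → E` on the
annulus `{r ≤ |z| ≤ √r}` is at most `C`, then some intermediate circle `|z| = ρ` is mapped
to a loop of length at most `√(4πC / log(1/r))`. -/
theorem courant_lebesgue {E : Type*} [NormedAddCommGroup E] [NormedSpace ℝ E]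
    (u : ℂ → E) (hu : ContDiff ℝ 1 u) (r : ℝ) (hr0 : 0 < r) (hr1 : r < 1)
    (C : ℝ)
    (hE : (∫ z in {z : ℂ | r ≤ ‖z‖ ∧ ‖z‖ ≤ Real.sqrt r}, ‖fderiv ℝ u z‖ ^ 2) ≤ C) :
    ∃ ρ ∈ Set.Icc r (Real.sqrt r),
      (∫ θ in (0 : ℝ)..(2 * π),
          ‖fderiv ℝ u ((ρ : ℂ) * Complex.exp (θ * Complex.I))
              (Complex.I * ((ρ : ℂ) * Complex.exp (θ * Complex.I)))‖)
        ≤ Real.sqrt (4 * π * C / Real.log (1 / r)) := by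
  classical
  have hD : Continuous (fderiv ℝ u) := hu.continuous_fderiv one_ne_zero
  set D := fderiv ℝ u with hDdef
  set A : Set ℂ := {z : ℂ | r ≤ ‖z‖ ∧ ‖z‖ ≤ Real.sqrt r} with hAdef
  set z : ℝ → ℝ → ℂ := fun ρ θ => (ρ : ℂ) * Complex.exp ((θ : ℂ) * Complex.I) with hzdef
  have hzc : Continuous fun p : ℝ × ℝ => z p.1 p.2 := by
    apply Continuous.mul
    · exact Complex.continuous_ofReal.comp continuous_fst
    · exact Complex.continuous_exp.comp
        ((Complex.continuous_ofReal.comp continuous_snd).mul continuous_const)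
  have hq : Continuous fun p : ℝ × ℝ => ‖D (z p.1 p.2) (Complex.I * z p.1 p.2)‖ :=
    ((hD.comp hzc).clm_apply (continuous_const.mul hzc)).norm
  have hFc : Continuous fun w : ℂ => ‖D w‖ ^ 2 := hD.norm.pow 2
  have hQc : Continuous fun p : ℝ × ℝ => ‖D (z p.1 p.2)‖ ^ 2 := hFc.comp hzc
  set g : ℝ → ℝ := fun ρ => ∫ θ in (0:ℝ)..(2*π), ‖D (z ρ θ) (Complex.I * z ρ θ)‖ with hgdef
  set H : ℝ → ℝ := fun ρ => ∫ θ in (0:ℝ)..(2*π), ‖D (z ρ θ)‖ ^ 2 with hHdef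
  have hgc : Continuous g :=
    intervalIntegral.continuous_parametric_intervalIntegral_of_continuous' (μ := volume)
      (f := fun ρ θ => ‖D (z ρ θ) (Complex.I * z ρ θ)‖) hq 0 (2*π)
  have hHc : Continuous H :=
    intervalIntegral.continuous_parametric_intervalIntegral_of_continuous' (μ := volume)
      (f := fun ρ θ => ‖D (z ρ θ)‖ ^ 2) hQc 0 (2*π)
  have hπ : (0:ℝ) < π := pi_pos
  have hsr : 0 < Real.sqrt r := Real.sqrt_pos.2 hr0
  have hrs : r ≤ Real.sqrt r := by
    nth_rewrite 1 [← Real.sqrt_mul_self hr0.le]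
    exact Real.sqrt_le_sqrt (by nlinarith)
  obtain ⟨ρ₀, hρ₀, hmin⟩ :=
    isCompact_Icc.exists_isMinOn (Set.nonempty_Icc.2 hrs) hgc.continuousOn
  refine ⟨ρ₀, hρ₀, ?_⟩
  show g ρ₀ ≤ Real.sqrt (4 * π * C / Real.log (1 / r))
  set m := g ρ₀ with hm
  have hm0 : 0 ≤ m := intervalIntegral.integral_nonneg (by positivity) fun θ _ => norm_nonneg _
  set L := Real.log (1 / r) with hLdef
  have hL : 0 < L := by
    rw [hLdef, one_div, Real.log_inv]
    linarith [Real.log_neg hr0 hr1]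
  suffices hkey : m ^ 2 ≤ 4 * π * C / L by
    calc m = Real.sqrt (m ^ 2) := (Real.sqrt_sq hm0).symm
    _ ≤ Real.sqrt (4 * π * C / L) := Real.sqrt_le_sqrt hkey
  rw [le_div_iff₀ hL]
  -- pointwise Cauchy–Schwarz bound
  have hgρcont : ∀ ρ : ℝ, Continuous fun θ => ‖D (z ρ θ) (Complex.I * z ρ θ)‖ := fun ρ =>
    hq.comp (Continuous.prodMk_right ρ)
  have hzabs : ∀ (ρ θ : ℝ), 0 ≤ ρ → ‖z ρ θ‖ = ρ := by
    intro ρ θ hρ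
    rw [hzdef]
    simp only [norm_mul, Complex.norm_real, Real.norm_eq_abs,
      Complex.norm_exp_ofReal_mul_I, mul_one]
    exact abs_of_nonneg hρ
  have hCS : ∀ ρ ∈ Set.Icc r (Real.sqrt r), m ^ 2 ≤ 2 * π * (ρ ^ 2 * H ρ) := by
    intro ρ hρ
    have hρ0 : 0 < ρ := lt_of_lt_of_le hr0 hρ.1
    have h1 : m ≤ g ρ := hmin hρ
    have h2 : g ρ ^ 2 ≤ (2 * π - 0) * ∫ θ in (0:ℝ)..(2*π), ‖D (z ρ θ) (Complex.I * z ρ θ)‖ ^ 2 :=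
      cs_interval (hgρcont ρ) (by positivity)
    have h3 : (∫ θ in (0:ℝ)..(2*π), ‖D (z ρ θ) (Complex.I * z ρ θ)‖ ^ 2)
        ≤ ∫ θ in (0:ℝ)..(2*π), ρ ^ 2 * ‖D (z ρ θ)‖ ^ 2 := by
      apply intervalIntegral.integral_mono_on (by positivity)
      · exact ((hgρcont ρ).pow 2).intervalIntegrable _ _
      · exact (continuous_const.mul (hQc.comp (Continuous.prodMk_right ρ))).intervalIntegrable _ _
      · intro θ _
        have hn : ‖Complex.I * z ρ θ‖ = ρ := by
          rw [norm_mul, Complex.norm_I, one_mul, hzabs ρ θ hρ0.le]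
        have hle : ‖D (z ρ θ) (Complex.I * z ρ θ)‖ ≤ ‖D (z ρ θ)‖ * ρ := by
          have h := (D (z ρ θ)).le_opNorm (Complex.I * z ρ θ)
          rwa [hn] at h
        calc ‖D (z ρ θ) (Complex.I * z ρ θ)‖ ^ 2 ≤ (‖D (z ρ θ)‖ * ρ) ^ 2 :=
              pow_le_pow_left₀ (norm_nonneg _) hle 2
        _ = ρ ^ 2 * ‖D (z ρ θ)‖ ^ 2 := by ring
    have hgρ0 : 0 ≤ g ρ :=
      intervalIntegral.integral_nonneg (by positivity) fun θ _ => norm_nonneg _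
    have h4 : (∫ θ in (0:ℝ)..(2*π), ρ ^ 2 * ‖D (z ρ θ)‖ ^ 2) = ρ ^ 2 * H ρ := by
      rw [intervalIntegral.integral_const_mul]
    calc m ^ 2 ≤ g ρ ^ 2 := pow_le_pow_left₀ hm0 h1 2
    _ ≤ (2 * π - 0) * ∫ θ in (0:ℝ)..(2*π), ‖D (z ρ θ) (Complex.I * z ρ θ)‖ ^ 2 := h2
    _ ≤ 2 * π * (ρ ^ 2 * H ρ) := by
        rw [sub_zero, ← h4]
        exact mul_le_mul_of_nonneg_left h3 (by positivity)
  have hpt : ∀ ρ ∈ Set.Icc r (Real.sqrt r), m ^ 2 / (2 * π) * (1 / ρ) ≤ ρ * H ρ := by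
    intro ρ hρ
    have hρ0 : 0 < ρ := lt_of_lt_of_le hr0 hρ.1
    have h := hCS ρ hρ
    rw [div_mul_eq_mul_div, mul_one_div, div_div, div_le_iff₀ (by positivity)]
    exact h.trans_eq (by ring)
  -- integrability
  have hint1 : IntervalIntegrable (fun ρ => m ^ 2 / (2*π) * (1/ρ)) volume r (Real.sqrt r) := by
    apply ContinuousOn.intervalIntegrable
    apply ContinuousOn.mul continuousOn_const
    apply ContinuousOn.div continuousOn_const continuousOn_id
    intro x hx
    rw [Set.uIcc_of_le hrs] at hx
    exact ne_of_gt (lt_of_lt_of_le hr0 hx.1)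
  have hint2 : IntervalIntegrable (fun ρ => ρ * H ρ) volume r (Real.sqrt r) :=
    (continuous_id.mul hHc).intervalIntegrable _ _
  have h0mem : (0:ℝ) ∉ Set.uIcc r (Real.sqrt r) := by
    rw [Set.uIcc_of_le hrs]
    intro h
    exact absurd h.1 (not_le.2 hr0)
  have hlogint : (∫ ρ in r..(Real.sqrt r), 1/ρ) = L / 2 := by
    rw [integral_one_div h0mem, hLdef, one_div, Real.log_inv,
      Real.log_div hsr.ne' hr0.ne', Real.log_sqrt hr0.le]
    ring
  -- polar coordinates
  have hsymm : ∀ p : ℝ × ℝ, Complex.polarCoord.symm p = z p.1 p.2 := by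
    intro p
    rw [Complex.polarCoord_symm_apply, hzdef]
    simp only [Complex.exp_mul_I]
    push_cast
    ring
  have hAmeas : MeasurableSet A := by
    have : A = {w : ℂ | r ≤ ‖w‖} ∩ {w : ℂ | ‖w‖ ≤ Real.sqrt r} := rfl
    rw [this]
    exact ((isClosed_le continuous_const continuous_norm).inter
      (isClosed_le continuous_norm continuous_const)).measurableSet
  have hSsub : Set.Icc r (Real.sqrt r) ×ˢ Set.Ioo (-π) π ⊆ polarCoord.target := by
    rintro ⟨ρ, θ⟩ ⟨h1, h2⟩
    exact ⟨lt_of_lt_of_le hr0 h1.1, h2⟩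
  have hSmeas : MeasurableSet (Set.Icc r (Real.sqrt r) ×ˢ Set.Ioo (-π) π) :=
    measurableSet_Icc.prod measurableSet_Ioo
  have e1 : (∫ w in A, ‖D w‖ ^ 2)
      = ∫ p in polarCoord.target,
          p.1 • (A.indicator fun w => ‖D w‖ ^ 2) (Complex.polarCoord.symm p) := by
    have h := Complex.integral_comp_polarCoord_symm (A.indicator fun w => ‖D w‖ ^ 2)
    rw [integral_indicator hAmeas] at h
    exact h.symm
  have e2 : (∫ p in polarCoord.target,
        p.1 • (A.indicator fun w => ‖D w‖ ^ 2) (Complex.polarCoord.symm p))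
      = ∫ p in polarCoord.target,
          (Set.Icc r (Real.sqrt r) ×ˢ Set.Ioo (-π) π).indicator
            (fun p : ℝ × ℝ => p.1 * ‖D (z p.1 p.2)‖ ^ 2) p := by
    apply setIntegral_congr_fun polarCoord.open_target.measurableSet
    rintro ⟨ρ, θ⟩ hp
    obtain ⟨hρ, hθ⟩ : ρ ∈ Set.Ioi (0:ℝ) ∧ θ ∈ Set.Ioo (-π) π := hp
    have hn : ‖Complex.polarCoord.symm (ρ, θ)‖ = ρ := by
      rw [Complex.norm_polarCoord_symm]
      exact abs_of_pos hρ
    dsimp only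
    by_cases hcase : r ≤ ρ ∧ ρ ≤ Real.sqrt r
    · have hmemA : Complex.polarCoord.symm (ρ, θ) ∈ A := by
        rw [hAdef]
        exact ⟨by rw [hn]; exact hcase.1, by rw [hn]; exact hcase.2⟩
      have hmemS : (ρ, θ) ∈ Set.Icc r (Real.sqrt r) ×ˢ Set.Ioo (-π) π := ⟨hcase, hθ⟩
      rw [Set.indicator_of_mem hmemA, Set.indicator_of_mem hmemS, hsymm, smul_eq_mul]
    · have h1 : Complex.polarCoord.symm (ρ, θ) ∉ A := by
        intro hmem
        rw [hAdef] at hmem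
        exact hcase ⟨by rw [← hn]; exact hmem.1, by rw [← hn]; exact hmem.2⟩
      have h2 : (ρ, θ) ∉ Set.Icc r (Real.sqrt r) ×ˢ Set.Ioo (-π) π := fun hmem =>
        hcase ⟨hmem.1.1, hmem.1.2⟩
      rw [Set.indicator_of_notMem h1, Set.indicator_of_notMem h2, smul_zero]
  have e3 : (∫ p in polarCoord.target,
        (Set.Icc r (Real.sqrt r) ×ˢ Set.Ioo (-π) π).indicator
          (fun p : ℝ × ℝ => p.1 * ‖D (z p.1 p.2)‖ ^ 2) p)
      = ∫ p in Set.Icc r (Real.sqrt r) ×ˢ Set.Ioo (-π) π, p.1 * ‖D (z p.1 p.2)‖ ^ 2 := by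
    rw [setIntegral_indicator hSmeas, Set.inter_eq_self_of_subset_right hSsub]
  have hintS : IntegrableOn (fun p : ℝ × ℝ => p.1 * ‖D (z p.1 p.2)‖ ^ 2)
      (Set.Icc r (Real.sqrt r) ×ˢ Set.Ioo (-π) π) := by
    apply IntegrableOn.mono_set
      ((continuous_fst.mul hQc).continuousOn.integrableOn_compact
        (isCompact_Icc.prod isCompact_Icc))
    exact Set.prod_mono Set.Subset.rfl Set.Ioo_subset_Icc_self
  have e4 : (∫ p in Set.Icc r (Real.sqrt r) ×ˢ Set.Ioo (-π) π, p.1 * ‖D (z p.1 p.2)‖ ^ 2)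
      = ∫ ρ in Set.Icc r (Real.sqrt r), ∫ θ in Set.Ioo (-π) π, ρ * ‖D (z ρ θ)‖ ^ 2 := by
    rw [Measure.volume_eq_prod] at hintS ⊢
    exact setIntegral_prod _ hintS
  have e5 : ∀ ρ ∈ Set.Icc r (Real.sqrt r),
      (∫ θ in Set.Ioo (-π) π, ρ * ‖D (z ρ θ)‖ ^ 2) = ρ * H ρ := by
    intro ρ _
    have hzper : ∀ θ : ℝ, z ρ (θ + 2 * π) = z ρ θ := by
      intro θ
      rw [hzdef]
      push_cast
      rw [add_mul, Complex.exp_add, Complex.exp_two_pi_mul_I, mul_one]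
    have hper : Function.Periodic (fun θ => ρ * ‖D (z ρ θ)‖ ^ 2) (2 * π) := by
      intro θ
      simp only [hzper]
    have h1 : (∫ θ in Set.Ioo (-π) π, ρ * ‖D (z ρ θ)‖ ^ 2)
        = ∫ θ in (-π)..π, ρ * ‖D (z ρ θ)‖ ^ 2 := by
      rw [intervalIntegral.integral_of_le (by linarith), integral_Ioc_eq_integral_Ioo]
    have h2 := hper.intervalIntegral_add_eq (-π) 0
    rw [show -π + 2 * π = π by ring, zero_add] at h2
    rw [h1, h2, intervalIntegral.integral_const_mul]
  have e5' : (∫ ρ in Set.Icc r (Real.sqrt r), ∫ θ in Set.Ioo (-π) π, ρ * ‖D (z ρ θ)‖ ^ 2)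
      = ∫ ρ in Set.Icc r (Real.sqrt r), ρ * H ρ :=
    setIntegral_congr_fun measurableSet_Icc e5
  have e6 : (∫ ρ in Set.Icc r (Real.sqrt r), ρ * H ρ) = ∫ ρ in r..(Real.sqrt r), ρ * H ρ := by
    rw [intervalIntegral.integral_of_le hrs, integral_Icc_eq_integral_Ioc]
  have hpolar : (∫ ρ in r..(Real.sqrt r), ρ * H ρ) ≤ C := by
    have : (∫ w in A, ‖D w‖ ^ 2) = ∫ ρ in r..(Real.sqrt r), ρ * H ρ := by
      rw [e1, e2, e3, e4, e5', e6]
    rw [← this]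
    exact hE
  calc m ^ 2 * L = (m ^ 2 / (2 * π)) * (L / 2) * (4 * π) := by
        rw [div_mul_eq_mul_div, div_mul_eq_mul_div, eq_comm,
          div_eq_iff (by positivity : (2*π) ≠ (0:ℝ))]
        ring
  _ ≤ C * (4 * π) := by
      apply mul_le_mul_of_nonneg_right _ (by positivity)
      calc (m ^ 2 / (2 * π)) * (L / 2)
          = ∫ ρ in r..(Real.sqrt r), m ^ 2 / (2 * π) * (1 / ρ) := by
            rw [intervalIntegral.integral_const_mul, hlogint]
      _ ≤ ∫ ρ in r..(Real.sqrt r), ρ * H ρ :=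
          intervalIntegral.integral_mono_on hrs hint1 hint2 hpt
      _ ≤ C := hpolar
  _ = 4 * π * C := by ring
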